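/- The function Q(x) = x² + x·φ(x)/Φ(x) is strictly convex on (0, ∞); specifically Q''(x) = K(x)/Φ(x)³ with K(x) = 2Φ(x)³ + 2xφ(x)³ + x³Φ(x)²φ(x) + 3x²φ(x)²Φ(x) − 3xΦ(x)²φ(x) − 2φ(x)²Φ(x) > 0 for all x > 0. -/

import Mathlib

open MeasureTheory ProbabilityTheory Real

noncomputable def stdPDF (u : ℝ) : ℝ := (Real.sqrt (2 * Real.pi))⁻¹ * Real.exp (-u ^ 2 / 2)

noncomputable def stdCDF (u : ℝ) : ℝ := ∫ t in Set.Iic u, stdPDF t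

lemma stdPDF_pos (u : ℝ) : 0 < stdPDF u := by
  unfold stdPDF
  positivity

lemma stdPDF_cont : Continuous stdPDF := by
  unfold stdPDF
  continuity

lemma stdPDF_integrable : Integrable stdPDF := by
  have h : Integrable (fun u : ℝ => Real.exp (-(1/2) * u ^ 2)) := integrable_exp_neg_mul_sq (by norm_num)
  have h2 := h.const_mul ((Real.sqrt (2 * Real.pi))⁻¹)
  refine h2.congr ?_
  filter_upwards with u
  unfold stdPDF
  ring_nf

lemma stdPDF_hasDeriv (x : ℝ) : HasDerivAt stdPDF (-x * stdPDF x) x := by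
  have h1 : HasDerivAt (fun u : ℝ => -u ^ 2 / 2) (-x) x := by
    have := ((hasDerivAt_pow 2 x).neg).div_const 2
    refine this.congr_deriv ?_; ring
  have h2 := (h1.exp).const_mul ((Real.sqrt (2 * Real.pi))⁻¹)
  refine h2.congr_deriv ?_
  unfold stdPDF; ring

lemma stdCDF_hasDeriv (x : ℝ) : HasDerivAt stdCDF (stdPDF x) x := by
  have key : ∀ y : ℝ, stdCDF y = stdCDF 0 + ∫ t in (0:ℝ)..y, stdPDF t := by
    intro y
    have := intervalIntegral.integral_Iic_sub_Iic (f := stdPDF) (μ := volume) (a := (0:ℝ)) (b := y)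
      (stdPDF_integrable.integrableOn) (stdPDF_integrable.integrableOn)
    unfold stdCDF
    linarith [this]
  have hd : HasDerivAt (fun y => stdCDF 0 + ∫ t in (0:ℝ)..y, stdPDF t) (stdPDF x) x := by
    have := (intervalIntegral.integral_hasDerivAt_right
      (stdPDF_integrable.intervalIntegrable (a := 0) (b := x))
      (stdPDF_cont.stronglyMeasurableAtFilter _ _)
      (stdPDF_cont.continuousAt)).const_add (stdCDF 0)
    exact this
  exact hd.congr_of_eventuallyEq (Filter.Eventually.of_forall fun y => key y)

lemma stdCDF_pos (x : ℝ) : 0 < stdCDF x := by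
  have h1 : (0:ℝ) < ∫ t in (x-1)..x, stdPDF t :=
    intervalIntegral.intervalIntegral_pos_of_pos_on
      (stdPDF_integrable.intervalIntegrable) (fun t _ => stdPDF_pos t) (by linarith)
  have h2 : (∫ t in (x-1)..x, stdPDF t) ≤ stdCDF x := by
    rw [intervalIntegral.integral_of_le (by linarith : x - 1 ≤ x)]
    apply setIntegral_mono_set (stdPDF_integrable.integrableOn)
      (Filter.Eventually.of_forall fun t => (stdPDF_pos t).le)
    exact HasSubset.Subset.eventuallyLE Set.Ioc_subset_Iic_self
  linarith

lemma stdPDF_total : ∫ u : ℝ, stdPDF u = 1 := by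
  have h : ∫ u : ℝ, Real.exp (-(1/2) * u ^ 2) = Real.sqrt (π / (1/2)) := integral_gaussian (1/2)
  have h2 : ∫ u : ℝ, stdPDF u = (Real.sqrt (2 * Real.pi))⁻¹ * ∫ u : ℝ, Real.exp (-(1/2) * u ^ 2) := by
    rw [← integral_const_mul]
    congr 1
    funext u
    unfold stdPDF
    ring_nf
  rw [h2, h]
  have : π / (1/2) = 2 * π := by ring
  rw [this]
  have hpos : (0:ℝ) < Real.sqrt (2 * π) := Real.sqrt_pos.2 (by positivity)
  field_simp

lemma stdCDF_zero : stdCDF 0 = 1/2 := by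
  have hsymm : (∫ t in Set.Iic (0:ℝ), stdPDF t) = ∫ t in Set.Ioi (0:ℝ), stdPDF t := by
    have := integral_comp_neg_Iic (0:ℝ) stdPDF
    simp only [neg_zero] at this
    rw [← this]
    congr 1
    funext t
    unfold stdPDF
    ring_nf
  have hsum : (∫ t in Set.Iic (0:ℝ), stdPDF t) + ∫ t in Set.Ioi (0:ℝ), stdPDF t = 1 := by
    rw [intervalIntegral.integral_Iic_add_Ioi stdPDF_integrable.integrableOn
      stdPDF_integrable.integrableOn, stdPDF_total]
  unfold stdCDF
  linarith [hsymm, hsum]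

lemma stdCDF_lower {x : ℝ} (hx : 0 ≤ x) : 1/2 + x * stdPDF x ≤ stdCDF x := by
  have key : stdCDF x = stdCDF 0 + ∫ t in (0:ℝ)..x, stdPDF t := by
    have := intervalIntegral.integral_Iic_sub_Iic (f := stdPDF) (μ := volume) (a := (0:ℝ)) (b := x)
      (stdPDF_integrable.integrableOn) (stdPDF_integrable.integrableOn)
    unfold stdCDF
    linarith [this]
  have hmono : x * stdPDF x ≤ ∫ t in (0:ℝ)..x, stdPDF t := by
    have h1 : (∫ t in (0:ℝ)..x, stdPDF x) ≤ ∫ t in (0:ℝ)..x, stdPDF t := by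
      apply intervalIntegral.integral_mono_on hx
        (intervalIntegrable_const) (stdPDF_integrable.intervalIntegrable)
      intro t ht
      unfold stdPDF
      have ht2 : t ^ 2 ≤ x ^ 2 := by nlinarith [ht.1, ht.2]
      have : Real.exp (-x ^ 2 / 2) ≤ Real.exp (-t ^ 2 / 2) := by
        apply Real.exp_le_exp.2; linarith
      have h0 : (0:ℝ) ≤ (Real.sqrt (2 * Real.pi))⁻¹ := by positivity
      exact mul_le_mul_of_nonneg_left this h0
    simpa using h1
  rw [key, stdCDF_zero]
  linarith

lemma stdPDF_sq_le (x : ℝ) : (stdPDF x) ^ 2 ≤ 1/6 := by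
  have h1 : stdPDF x ≤ (Real.sqrt (2 * Real.pi))⁻¹ := by
    unfold stdPDF
    have h : Real.exp (-x ^ 2 / 2) ≤ 1 := Real.exp_le_one_iff.2 (by nlinarith [sq_nonneg x])
    exact mul_le_of_le_one_right (by positivity) h
  have h2 : ((Real.sqrt (2 * Real.pi))⁻¹) ^ 2 = (2 * π)⁻¹ := by
    rw [← Real.sqrt_inv, Real.sq_sqrt (by positivity)]
  have h3 : (2 * π)⁻¹ ≤ 1/6 := by
    rw [inv_le_iff_one_le_mul₀ (by positivity)]
    nlinarith [Real.pi_gt_three]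
  calc (stdPDF x) ^ 2 ≤ ((Real.sqrt (2 * Real.pi))⁻¹) ^ 2 := by
        nlinarith [(stdPDF_pos x).le, h1]
    _ ≤ 1/6 := by rw [h2]; exact h3

noncomputable def Q (x : ℝ) : ℝ := x ^ 2 + x * stdPDF x / stdCDF x

noncomputable def K (x : ℝ) : ℝ :=
  2 * (stdCDF x) ^ 3 + 2 * x * (stdPDF x) ^ 3 + x ^ 3 * (stdCDF x) ^ 2 * stdPDF x +
    3 * x ^ 2 * (stdPDF x) ^ 2 * stdCDF x - 3 * x * (stdCDF x) ^ 2 * stdPDF x -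
    2 * (stdPDF x) ^ 2 * stdCDF x

lemma K_pos {x : ℝ} (hx : 0 < x) : 0 < K x := by
  have hp : 0 < stdPDF x := stdPDF_pos x
  have hP : 0 < stdCDF x := stdCDF_pos x
  have hP2 : 1/2 + x * stdPDF x ≤ stdCDF x := stdCDF_lower hx.le
  have hpsq : (stdPDF x) ^ 2 ≤ 1/6 := stdPDF_sq_le x
  set p := stdPDF x
  set P := stdCDF x
  have hu : 0 < x * p := mul_pos hx hp
  have hG : 0 < 2*P^2 - 2*p^2 - 3*(x*p)*P + 3*(x*p)^2 := by
    have h1 : 0 ≤ P - (1/2 + x*p) := by linarith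
    have h2 : 0 ≤ 2*P + 1 - x*p := by linarith
    nlinarith [mul_nonneg h1 h2, sq_nonneg (x*p)]
  have hK : K x = P * (2*P^2 - 2*p^2 - 3*(x*p)*P + 3*(x*p)^2) + 2*x*p^3 + x^3*P^2*p := by
    unfold K; ring
  rw [hK]
  have := mul_pos hP hG
  nlinarith [mul_pos hx (pow_pos hp 3), mul_pos (mul_pos (pow_pos hx 3) (pow_pos hP 2)) hp]

noncomputable def Q1 (x : ℝ) : ℝ :=
  2*x + ((1 - x^2) * stdPDF x * stdCDF x - x * stdPDF x * stdPDF x) / (stdCDF x)^2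

lemma hasDerivAt_Q (x : ℝ) : HasDerivAt Q (Q1 x) x := by
  have hP := stdCDF_hasDeriv x
  have hp := stdPDF_hasDeriv x
  have hPne : stdCDF x ≠ 0 := (stdCDF_pos x).ne'
  have hf : HasDerivAt (fun y => y * stdPDF y) (1 * stdPDF x + x * (-x * stdPDF x)) x :=
    (hasDerivAt_id x).mul hp
  have hq := hf.div hP hPne
  have hsum := (hasDerivAt_pow 2 x).add hq
  have : Q = fun y => y ^ 2 + y * stdPDF y / stdCDF y := rfl
  rw [this]
  refine hsum.congr_deriv ?_
  unfold Q1
  have h2 : ((2:ℕ):ℝ) * x ^ (2-1) = 2 * x := by norm_num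
  rw [h2]
  congr 1
  ring

lemma deriv_Q : deriv Q = Q1 := funext fun x => (hasDerivAt_Q x).deriv

lemma hasDerivAt_Q1 (x : ℝ) : HasDerivAt Q1 (K x / (stdCDF x) ^ 3) x := by
  have hP := stdCDF_hasDeriv x
  have hp := stdPDF_hasDeriv x
  have hPne : stdCDF x ≠ 0 := (stdCDF_pos x).ne'
  have h1 := (hasDerivAt_const x (1:ℝ)).sub (hasDerivAt_pow 2 x)
  have h2 := (h1.mul hp).mul hP
  have h3 := ((hasDerivAt_id x).mul hp).mul hp
  have hN := h2.sub h3
  have hden := hP.pow 2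
  have hq := hN.div hden (pow_ne_zero 2 hPne)
  have hfull := ((hasDerivAt_id x).const_mul (2:ℝ)).add hq
  have hQ1 : Q1 = fun y => 2*y + ((1 - y^2) * stdPDF y * stdCDF y - y * stdPDF y * stdPDF y) / (stdCDF y)^2 := rfl
  rw [hQ1]
  refine hfull.congr_deriv ?_
  unfold K
  simp only [Pi.mul_apply, Pi.sub_apply, Pi.pow_apply, id_eq]
  field_simp
  ring

/-- `Q(x) = x² + x·φ(x)/Φ(x)` is strictly convex on `(0, ∞)`,
with `Q''(x) = K(x)/Φ(x)³` and `K(x) > 0` for `x > 0`. -/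
theorem Q_strictConvex :
    (∀ x : ℝ, 0 < x → deriv (deriv Q) x = K x / (stdCDF x) ^ 3 ∧ 0 < K x) ∧
      StrictConvexOn ℝ (Set.Ioi 0) Q := by
  have hd2 : ∀ x : ℝ, deriv (deriv Q) x = K x / (stdCDF x) ^ 3 := by
    intro x
    rw [deriv_Q]
    exact (hasDerivAt_Q1 x).deriv
  constructor
  · exact fun x hx => ⟨hd2 x, K_pos hx⟩
  · apply strictConvexOn_of_deriv2_pos (convex_Ioi 0)
    · exact (Continuous.continuousOn (by
        exact continuous_iff_continuousAt.2 fun y => (hasDerivAt_Q y).continuousAt))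
    · intro x hx
      rw [interior_Ioi] at hx
      have : deriv^[2] Q x = deriv (deriv Q) x := rfl
      rw [this, hd2 x]
      exact div_pos (K_pos hx) (pow_pos (stdCDF_pos x) 3)
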